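/- First-iterate upper bound and positivity of σ♯ in the substochastic case (inequalities (3.38) and (3.46)). Define v₀(x,t) := η − β and v₁(x,t) := ∫₀ᵗ ∫_X K(x,y;t−s) h(y,s) G(v₀(y,s) + g(y,s)) dμ(y) ds. Then v₁(x,t) ≤ (η − β)(1 − e^{−tλ₋}) for a.e. x ∈ X and a.e. t > 0. Moreover, the constant σ♯ := min{ α G(β₀) / ((η−β)λ₋), (α/((η−β)λ₋)) · G((α/λ₊) G(η−β)(1 − e^{−T₀λ₊})) } satisfies σ♯ ∈ (0,1). -/

import Mathlib

open MeasureTheory Set Filter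

/-- **First-iterate upper bound and positivity of `σ♯`, substochastic case
(inequalities (3.38) and (3.46)).** With
`v₁(x,t) = ∫₀ᵗ ∫_X K(x,y;t-s) h(y,s) G(η - β + g(y,s)) dμ ds`, one has
`v₁(x,t) ≤ (η - β)(1 - e^{-tλ₋})` a.e.; moreover the constant
`σ♯ = min{α G(β₀)/((η-β)λ₋), (α/((η-β)λ₋)) G((α/λ₊) G(η-β)(1 - e^{-T₀λ₊}))}`
lies in `(0,1)`. -/
theorem first_iterate_bound_and_sigma_sharp_substochastic
    {X : Type*} [MeasurableSpace X] (μ : Measure X) [SigmaFinite μ]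
    (K : X → X → ℝ → ℝ) (g h : X → ℝ → ℝ) (G : ℝ → ℝ)
    (lamm lamp β γ α η T₀ β₀ σsharp : ℝ)
    (hlam : 0 < lamm) (hlam_le : lamm ≤ lamp)
    (hK_meas : Measurable fun q : X × X × ℝ => K q.1 q.2.1 q.2.2)
    (hK_nonneg : ∀ x y t, 0 ≤ K x y t)
    (hK_sub : ∀ᵐ x ∂μ, ∀ᵐ t ∂(volume.restrict (Ioi (0:ℝ))),
      Real.exp (-(t * lamp)) ≤ (∫ y, K x y t ∂μ) ∧
      (∫ y, K x y t ∂μ) ≤ Real.exp (-(t * lamm)))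
    (hg_meas : Measurable fun q : X × ℝ => g q.1 q.2)
    (hg_nonneg : ∀ x t, 0 ≤ g x t)
    (hg_bdd : MemLp (fun q : X × ℝ => g q.1 q.2) ⊤
      (μ.prod (volume.restrict (Ioi (0:ℝ)))))
    (hβ : β = (eLpNorm (fun q : X × ℝ => g q.1 q.2) ⊤
      (μ.prod (volume.restrict (Ioi (0:ℝ))))).toReal)
    (hT₀ : 0 < T₀) (hβ₀_pos : 0 < β₀)
    (hβ₀ : ∀ x t, 0 < t → t < T₀ → β₀ ≤ g x t)
    (hh_meas : Measurable fun q : X × ℝ => h q.1 q.2)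
    (hh_nonneg : ∀ x t, 0 ≤ h x t)
    (hα_pos : 0 < α) (hα : ∀ x t, 0 < t → α ≤ h x t)
    (hh_bdd : MemLp (fun q : X × ℝ => h q.1 q.2) ⊤
      (μ.prod (volume.restrict (Ioi (0:ℝ)))))
    (hγ : γ = (eLpNorm (fun q : X × ℝ => h q.1 q.2) ⊤
      (μ.prod (volume.restrict (Ioi (0:ℝ))))).toReal)
    (hG_cont : ContinuousOn G (Ici 0))
    (hG_zero : G 0 = 0)
    (hG_nonneg : ∀ u, 0 ≤ u → 0 ≤ G u)
    (hG_mono : StrictMonoOn G (Ici 0))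
    (hG_conc : ConcaveOn ℝ (Ici 0) G)
    (hη_pos : 0 < η) (hη_eq : γ * G η = (η - β) * lamm)
    (v₁ : X → ℝ → ℝ)
    (hv₁ : ∀ x t, v₁ x t =
      ∫ s in Ioc (0:ℝ) t, ∫ y, K x y (t - s) * (h y s * G (η - β + g y s)) ∂μ)
    (hσsharp : σsharp = min (α * G β₀ / ((η - β) * lamm))
      (α / ((η - β) * lamm) *
        G (α / lamp * G (η - β) * (1 - Real.exp (-(T₀ * lamp)))))) :
    (∀ᵐ q ∂(μ.prod (volume.restrict (Ioi (0:ℝ)))),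
      v₁ q.1 q.2 ≤ (η - β) * (1 - Real.exp (-(q.2 * lamm)))) ∧
    σsharp ∈ Ioo (0:ℝ) 1 := by
  set ν : Measure ℝ := volume.restrict (Ioi (0:ℝ)) with hνdef
  have hβnn : 0 ≤ β := hβ ▸ ENNReal.toReal_nonneg
  have hγnn : 0 ≤ γ := hγ ▸ ENNReal.toReal_nonneg
  have hGη : 0 < G η := by
    simpa [hG_zero] using hG_mono (self_mem_Ici) (le_of_lt hη_pos) hη_pos
  -- the product measure is nonzero
  have hprodne : μ.prod ν ≠ 0 := by
    intro h0
    have hβz : β = 0 := by rw [hβ, h0, eLpNorm_measure_zero]; simp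
    rw [h0, eLpNorm_measure_zero] at hγ
    simp at hγ
    rw [hγ, hβz, zero_mul, sub_zero] at hη_eq
    nlinarith
  have hμne : μ ≠ 0 := by
    intro h0; exact hprodne (by rw [h0, Measure.zero_prod])
  haveI : (ae (μ.prod ν)).NeBot := ae_neBot.2 hprodne
  -- a.e. bounds from the essential sup
  have hg_le : ∀ᵐ q ∂(μ.prod ν), g q.1 q.2 ≤ β := by
    have hfin := hg_bdd.2
    filter_upwards [ae_le_eLpNormEssSup (f := fun q : X × ℝ => g q.1 q.2)
      (μ := μ.prod ν)] with q hq
    have h1 : ‖g q.1 q.2‖ ≤ β := by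
      rw [hβ, eLpNorm_exponent_top]
      have := ENNReal.toReal_mono (by rw [← eLpNorm_exponent_top]; exact hfin.ne) hq
      simpa using this
    calc g q.1 q.2 ≤ |g q.1 q.2| := le_abs_self _
      _ ≤ β := by rwa [Real.norm_eq_abs] at h1
  have hh_le : ∀ᵐ q ∂(μ.prod ν), h q.1 q.2 ≤ γ := by
    have hfin := hh_bdd.2
    filter_upwards [ae_le_eLpNormEssSup (f := fun q : X × ℝ => h q.1 q.2)
      (μ := μ.prod ν)] with q hq
    have h1 : ‖h q.1 q.2‖ ≤ γ := by
      rw [hγ, eLpNorm_exponent_top]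
      have := ENNReal.toReal_mono (by rw [← eLpNorm_exponent_top]; exact hfin.ne) hq
      simpa using this
    calc h q.1 q.2 ≤ |h q.1 q.2| := le_abs_self _
      _ ≤ γ := by rwa [Real.norm_eq_abs] at h1
  -- α ≤ γ
  have hsnd : ∀ᵐ q : X × ℝ ∂(μ.prod ν), q.2 ∈ Ioi (0:ℝ) :=
    (Measure.ae_prod_iff_ae_ae (measurable_snd measurableSet_Ioi)).2
      (ae_of_all _ fun _ => ae_restrict_mem measurableSet_Ioi)
  have hαγ : α ≤ γ := by
    obtain ⟨q, hq1, hq2⟩ := (hh_le.and hsnd).exists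
    exact le_trans (hα q.1 q.2 hq2) hq1
  -- β₀ ≤ β
  have hβ₀β : β₀ ≤ β := by
    by_contra hcon
    push_neg at hcon
    have hS : (μ.prod ν) (univ ×ˢ Ioo (0:ℝ) T₀) = 0 := by
      refine measure_eq_zero_iff_ae_notMem.2 ?_
      filter_upwards [hg_le] with q hq hmem
      obtain ⟨-, ht1, ht2⟩ := hmem
      exact absurd ((hβ₀ q.1 q.2 ht1 ht2).trans hq) (not_le.2 hcon)
    rw [Measure.prod_prod] at hS
    have h1 : μ univ ≠ 0 := by
      simpa [Measure.measure_univ_eq_zero] using hμne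
    have h2 : ν (Ioo (0:ℝ) T₀) ≠ 0 := by
      rw [hνdef, Measure.restrict_apply' measurableSet_Ioi,
        inter_eq_left.2 Ioo_subset_Ioi_self, Real.volume_Ioo]
      simpa using hT₀
    exact (mul_ne_zero h1 h2) hS
  have hγpos : 0 < γ := lt_of_lt_of_le hα_pos hαγ
  have hηβ : β < η := by nlinarith [mul_pos hγpos hGη]
  have hηβ' : 0 ≤ η - β := by linarith
  -- σsharp ∈ (0,1)
  have hdenpos : 0 < (η - β) * lamm := mul_pos (by linarith) hlam
  have hGβ₀ : 0 < G β₀ := by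
    simpa [hG_zero] using hG_mono self_mem_Ici hβ₀_pos.le hβ₀_pos
  have ht1pos : 0 < α * G β₀ / ((η - β) * lamm) :=
    div_pos (mul_pos hα_pos hGβ₀) hdenpos
  have hlamp : 0 < lamp := lt_of_lt_of_le hlam hlam_le
  have hGηβ' : 0 < G (η - β) := by
    have h := hG_mono self_mem_Ici (mem_Ici.2 hηβ') (by linarith : (0:ℝ) < η - β)
    simpa [hG_zero] using h
  have hexp1 : Real.exp (-(T₀ * lamp)) < 1 := by
    rw [← Real.exp_zero]
    exact Real.exp_lt_exp.2 (by nlinarith)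
  have hcpos : 0 < α / lamp * G (η - β) * (1 - Real.exp (-(T₀ * lamp))) :=
    mul_pos (mul_pos (div_pos hα_pos hlamp) hGηβ') (by linarith)
  have hGc : 0 < G (α / lamp * G (η - β) * (1 - Real.exp (-(T₀ * lamp)))) := by
    simpa [hG_zero] using hG_mono self_mem_Ici hcpos.le hcpos
  have ht2pos : 0 < α / ((η - β) * lamm) *
      G (α / lamp * G (η - β) * (1 - Real.exp (-(T₀ * lamp)))) :=
    mul_pos (div_pos hα_pos hdenpos) hGc
  have hσpos : 0 < σsharp := hσsharp ▸ lt_min ht1pos ht2pos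
  have ht1lt : α * G β₀ / ((η - β) * lamm) < 1 := by
    rw [div_lt_one hdenpos, ← hη_eq]
    calc α * G β₀ ≤ γ * G β₀ := mul_le_mul_of_nonneg_right hαγ hGβ₀.le
      _ < γ * G η := by
          apply mul_lt_mul_of_pos_left _ hγpos
          exact hG_mono (mem_Ici.2 hβ₀_pos.le) (mem_Ici.2 hη_pos.le) (by linarith)
  have hσlt : σsharp < 1 := lt_of_le_of_lt (hσsharp ▸ min_le_left _ _) ht1lt
  -- the measurable extension of G
  set Gm : ℝ → ℝ := fun u => G (max u 0) with hGmdef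
  have hGm_cont : Continuous Gm :=
    hG_cont.comp_continuous (continuous_id.max continuous_const) fun u => le_max_right u 0
  have hGm_eq : ∀ u : ℝ, 0 ≤ u → Gm u = G u := fun u hu => by
    simp [hGmdef, max_eq_left hu]
  have hGm_meas : Measurable Gm := hGm_cont.measurable
  -- measurability of the parametric integrals
  have hψ : Measurable fun z : (X × ℝ × ℝ) × X =>
      K z.1.1 z.2 z.1.2.1 * (h z.2 z.1.2.2 * Gm (η - β + g z.2 z.1.2.2)) := by
    apply Measurable.mul
    · exact hK_meas.comp
        ((measurable_fst.fst).prodMk (measurable_snd.prodMk measurable_fst.snd.fst))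
    · exact (hh_meas.comp (measurable_snd.prodMk measurable_fst.snd.snd)).mul
        (hGm_meas.comp (measurable_const.add
          (hg_meas.comp (measurable_snd.prodMk measurable_fst.snd.snd))))
  have hΦ : StronglyMeasurable fun p : X × ℝ × ℝ =>
      ∫ y, K p.1 y p.2.1 * (h y p.2.2 * Gm (η - β + g y p.2.2)) ∂μ :=
    hψ.stronglyMeasurable.integral_prod_right'
  have hFmeas : StronglyMeasurable fun q : X × ℝ =>
      ∫ s, (Ioc (0:ℝ) q.2).indicator
        (fun s => ∫ y, K q.1 y (q.2 - s) * (h y s * Gm (η - β + g y s)) ∂μ) s := by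
    have hf : Measurable fun z : (X × ℝ) × ℝ =>
        (Ioc (0:ℝ) z.1.2).indicator
          (fun s => ∫ y, K z.1.1 y (z.1.2 - s) * (h y s * Gm (η - β + g y s)) ∂μ) z.2 := by
      have heq : (fun z : (X × ℝ) × ℝ =>
          (Ioc (0:ℝ) z.1.2).indicator
            (fun s => ∫ y, K z.1.1 y (z.1.2 - s) * (h y s * Gm (η - β + g y s)) ∂μ) z.2) =
          fun z : (X × ℝ) × ℝ =>
            if z.2 ∈ Ioc (0:ℝ) z.1.2 then
              ∫ y, K z.1.1 y (z.1.2 - z.2) * (h y z.2 * Gm (η - β + g y z.2)) ∂μ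
            else 0 := by
        funext z; rw [Set.indicator_apply]
      rw [heq]
      refine Measurable.ite ?_ ?_ measurable_const
      · have : {z : (X × ℝ) × ℝ | z.2 ∈ Ioc (0:ℝ) z.1.2} =
            {z : (X × ℝ) × ℝ | (0:ℝ) < z.2} ∩ {z | z.2 ≤ z.1.2} := by
          ext z; simp [Set.mem_Ioc, and_comm]
        rw [this]
        exact (measurableSet_lt measurable_const measurable_snd).inter
          (measurableSet_le measurable_snd measurable_fst.snd)
      · exact hΦ.measurable.comp
          ((measurable_fst.fst).prodMk
            ((measurable_fst.snd.sub measurable_snd).prodMk measurable_snd))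
    exact hf.stronglyMeasurable.integral_prod_right'
  -- v₁ agrees with the measurable function
  have hv₁' : (fun q : X × ℝ => v₁ q.1 q.2) = fun q : X × ℝ =>
      ∫ s, (Ioc (0:ℝ) q.2).indicator
        (fun s => ∫ y, K q.1 y (q.2 - s) * (h y s * Gm (η - β + g y s)) ∂μ) s := by
    funext q
    rw [hv₁, integral_indicator measurableSet_Ioc]
    congr 1
    funext s
    congr 1
    funext y
    rw [hGm_eq (η - β + g y s) (add_nonneg hηβ' (hg_nonneg y s))]
  have hset : MeasurableSet {q : X × ℝ |
      v₁ q.1 q.2 ≤ (η - β) * (1 - Real.exp (-(q.2 * lamm)))} := by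
    have hrhs : Measurable fun q : X × ℝ => (η - β) * (1 - Real.exp (-(q.2 * lamm))) := by
      fun_prop
    have hlhs : Measurable fun q : X × ℝ => v₁ q.1 q.2 := by
      rw [hv₁']; exact hFmeas.measurable
    exact measurableSet_le hlhs hrhs
  refine ⟨(Measure.ae_prod_iff_ae_ae hset).2 ?_, hσpos, hσlt⟩
  -- improved kernel bound: integrability
  have hK2 : ∀ᵐ x ∂μ, ∀ᵐ τ ∂ν, Integrable (fun y => K x y τ) μ ∧
      (∫ y, K x y τ ∂μ) ≤ Real.exp (-(τ * lamm)) := by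
    filter_upwards [hK_sub] with x hx
    filter_upwards [hx] with τ hτ
    refine ⟨?_, hτ.2⟩
    by_contra hni
    rw [integral_undef hni] at hτ
    exact absurd hτ.1 (not_le.2 (Real.exp_pos _))
  -- swap the order of quantifiers for the g/h bounds
  have hgh : ∀ᵐ s ∂ν, ∀ᵐ y ∂μ, g y s ≤ β ∧ h y s ≤ γ := by
    have hprod : ∀ᵐ q : X × ℝ ∂(μ.prod ν), g q.1 q.2 ≤ β ∧ h q.1 q.2 ≤ γ :=
      hg_le.and hh_le
    have hmeas : MeasurableSet {z : X × ℝ | g z.1 z.2 ≤ β ∧ h z.1 z.2 ≤ γ} :=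
      (measurableSet_le hg_meas measurable_const).inter
        (measurableSet_le hh_meas measurable_const)
    exact (Measure.ae_ae_comm hmeas).1 (Measure.ae_ae_of_ae_prod hprod)
  filter_upwards [hK2] with x hx
  filter_upwards [ae_restrict_mem measurableSet_Ioi] with t ht
  rw [mem_Ioi] at ht
  rw [hv₁]
  -- restriction helper
  have hmono : ∀ N : Set ℝ, ν N = 0 → (volume.restrict (Ioc (0:ℝ) t)) N = 0 := by
    intro N hN
    rw [hνdef, Measure.restrict_apply' measurableSet_Ioi] at hN
    rw [Measure.restrict_apply' measurableSet_Ioc]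
    exact measure_mono_null (inter_subset_inter_right _ Ioc_subset_Ioi_self) hN
  -- a.e. s in (0,t], the g/h bounds hold
  have hghs : ∀ᵐ s ∂(volume.restrict (Ioc (0:ℝ) t)),
      ∀ᵐ y ∂μ, g y s ≤ β ∧ h y s ≤ γ :=
    mem_ae_iff.2 (hmono _ (mem_ae_iff.1 hgh))
  -- a.e. s in (0,t], the kernel bound at t - s holds
  have hgood : ∀ᵐ s ∂(volume.restrict (Ioc (0:ℝ) t)),
      Integrable (fun y => K x y (t - s)) μ ∧
      (∫ y, K x y (t - s) ∂μ) ≤ Real.exp (-((t - s) * lamm)) := by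
    set R : ℝ → Prop := fun τ => Integrable (fun y => K x y τ) μ ∧
      (∫ y, K x y τ ∂μ) ≤ Real.exp (-(τ * lamm)) with hRdef
    have hN : volume ({τ | ¬ R τ} ∩ Ioi (0:ℝ)) = 0 := by
      have := mem_ae_iff.1 hx
      rwa [hνdef, Measure.restrict_apply' measurableSet_Ioi] at this
    obtain ⟨M, hMsub, hMmeas, hMnull⟩ := exists_measurable_superset_of_null hN
    have hpre : volume ((fun s => t - s) ⁻¹' M) = 0 := by
      rw [(Measure.measurePreserving_sub_left volume t).measure_preimage
        hMmeas.nullMeasurableSet]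
      exact hMnull
    have hsing : (volume.restrict (Ioc (0:ℝ) t)) {t} = 0 := by
      rw [Measure.restrict_apply' measurableSet_Ioc]
      exact measure_mono_null inter_subset_left (measure_singleton t)
    have hpre' : (volume.restrict (Ioc (0:ℝ) t)) ((fun s => t - s) ⁻¹' M) = 0 := by
      rw [Measure.restrict_apply' measurableSet_Ioc]
      exact measure_mono_null inter_subset_left hpre
    have h1 : ∀ᵐ s ∂(volume.restrict (Ioc (0:ℝ) t)), s ∉ (fun s => t - s) ⁻¹' M := by
      rw [ae_iff]
      simp only [not_not]; exact hpre'
    have h2 : ∀ᵐ s ∂(volume.restrict (Ioc (0:ℝ) t)), s ≠ t := by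
      rw [ae_iff]
      simpa [not_not] using hsing
    filter_upwards [h1, h2, ae_restrict_mem measurableSet_Ioc] with s hs1 hs2 hs3
    by_contra hns
    apply hs1
    apply hMsub
    constructor
    · exact hns
    · rw [mem_Ioi]
      rcases hs3 with ⟨hs3a, hs3b⟩
      rcases lt_or_eq_of_le hs3b with hlt | heq
      · exact sub_pos.mpr hlt
      · exact absurd heq hs2
  -- the inner bound
  have hinner : ∀ᵐ s ∂(volume.restrict (Ioc (0:ℝ) t)),
      (∫ y, K x y (t - s) * (h y s * G (η - β + g y s)) ∂μ) ≤
        γ * G η * Real.exp (-((t - s) * lamm)) := by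
    filter_upwards [hghs, hgood] with s hQ hR
    have step1 : (∫ y, K x y (t - s) * (h y s * G (η - β + g y s)) ∂μ) ≤
        ∫ y, K x y (t - s) * (γ * G η) ∂μ := by
      apply integral_mono_of_nonneg
      · exact ae_of_all _ fun y => mul_nonneg (hK_nonneg _ _ _)
          (mul_nonneg (hh_nonneg _ _) (hG_nonneg _ (add_nonneg hηβ' (hg_nonneg _ _))))
      · exact hR.1.mul_const _
      · filter_upwards [hQ] with y hy
        refine mul_le_mul_of_nonneg_left ?_ (hK_nonneg _ _ _)
        refine mul_le_mul hy.2 ?_ (hG_nonneg _ (add_nonneg hηβ' (hg_nonneg _ _))) hγnn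
        exact hG_mono.monotoneOn (mem_Ici.2 (add_nonneg hηβ' (hg_nonneg _ _)))
          (mem_Ici.2 hη_pos.le) (by linarith [hy.1])
    have step2 : (∫ y, K x y (t - s) * (γ * G η) ∂μ) =
        (∫ y, K x y (t - s) ∂μ) * (γ * G η) := integral_mul_const _ _
    have step3 : (∫ y, K x y (t - s) ∂μ) * (γ * G η) ≤
        Real.exp (-((t - s) * lamm)) * (γ * G η) :=
      mul_le_mul_of_nonneg_right hR.2 (mul_nonneg hγnn hGη.le)
    calc (∫ y, K x y (t - s) * (h y s * G (η - β + g y s)) ∂μ)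
        ≤ (∫ y, K x y (t - s) ∂μ) * (γ * G η) := step2 ▸ step1
      _ ≤ Real.exp (-((t - s) * lamm)) * (γ * G η) := step3
      _ = γ * G η * Real.exp (-((t - s) * lamm)) := by ring
  -- integrate the bound
  have hJ : (∫ s in Ioc (0:ℝ) t, Real.exp (-((t - s) * lamm))) =
      lamm⁻¹ * (1 - Real.exp (-(t * lamm))) := by
    rw [← intervalIntegral.integral_of_le ht.le]
    have h1 : (∫ s in (0:ℝ)..t, Real.exp (-((t - s) * lamm))) =
        ∫ u in (t - t)..(t - 0), Real.exp (-(u * lamm)) :=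
      intervalIntegral.integral_comp_sub_left (fun u => Real.exp (-(u * lamm))) t
    rw [h1, sub_self, sub_zero]
    have h2 : (∫ u in (0:ℝ)..t, Real.exp (-(u * lamm))) =
        lamm⁻¹ • ∫ v in (0 * lamm)..(t * lamm), Real.exp (-v) :=
      intervalIntegral.integral_comp_mul_right (fun v => Real.exp (-v)) hlam.ne'
    rw [h2, zero_mul]
    have h3 : (∫ v in (0:ℝ)..(t * lamm), Real.exp (-v)) =
        ∫ v in (-(t * lamm))..(-(0:ℝ)), Real.exp v :=
      intervalIntegral.integral_comp_neg Real.exp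
    rw [h3, neg_zero, integral_exp, Real.exp_zero, smul_eq_mul]
  have hBcont : Continuous fun s : ℝ => γ * G η * Real.exp (-((t - s) * lamm)) := by
    fun_prop
  calc (∫ s in Ioc (0:ℝ) t, ∫ y, K x y (t - s) * (h y s * G (η - β + g y s)) ∂μ)
      ≤ ∫ s in Ioc (0:ℝ) t, γ * G η * Real.exp (-((t - s) * lamm)) := by
        apply integral_mono_of_nonneg
        · exact ae_of_all _ fun s => integral_nonneg fun y =>
            mul_nonneg (hK_nonneg _ _ _) (mul_nonneg (hh_nonneg _ _)
              (hG_nonneg _ (add_nonneg hηβ' (hg_nonneg _ _))))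
        · exact hBcont.integrableOn_Ioc
        · exact hinner
    _ = γ * G η * ∫ s in Ioc (0:ℝ) t, Real.exp (-((t - s) * lamm)) := by
        rw [integral_const_mul]
    _ = (η - β) * (1 - Real.exp (-(t * lamm))) := by
        rw [hJ, hη_eq]
        field_simp
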